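/- Let V be a finite-dimensional vector space over a field k and U ⊆ V a Zariski open subset that is affine as a variety. Then the complement V \ U is either empty or of pure codimension one in V. -/

import Mathlib

/-!
STATEMENT 18: Let `V` be a finite-dimensional vector space over a field `k` (identified
with affine `n`-space `Spec k[x₁,…,xₙ]` via a choice of basis) and `U ⊆ V` a nonempty
Zariski open subset that is affine as a variety.  Then the complement `V \ U` is either
empty or of pure codimension one in `V`: every irreducible component of `V \ U` has
coheight one in the poset of irreducible closed subsets of `V`.
-/

open AlgebraicGeometry CategoryTheory TopologicalSpace

/-- A closed subset `C` of a topological space is of pure codimension one if every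
irreducible component of `C` (i.e. maximal irreducible closed subset contained in `C`)
has coheight one in the poset of irreducible closed subsets of the ambient space. -/
def PureCodimOne {X : Type} [TopologicalSpace X] (C : Set X) : Prop :=
  ∀ Z : IrreducibleCloseds X, Z.carrier ⊆ C →
    (∀ Z' : IrreducibleCloseds X, Z'.carrier ⊆ C → Z ≤ Z' → Z' = Z) →
    Order.coheight Z = 1


lemma prime_mem_of_prime_le_span {R : Type*} [CommRing R] [IsDomain R]
    [UniqueFactorizationMonoid R]
    {π : R} (hπ : Prime π) {q : Ideal R} (hq : q.IsPrime) (hq0 : q ≠ ⊥)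
    (hle : q ≤ Ideal.span {π}) : π ∈ q := by
  obtain ⟨ρ, hρq, hρ⟩ := hq.exists_mem_prime_of_ne_bot hq0
  have hdvd : π ∣ ρ := Ideal.mem_span_singleton.mp (hle hρq)
  obtain ⟨u, hu⟩ := (hπ.associated_of_dvd hρ hdvd).symm
  exact hu ▸ q.mul_mem_right _ hρq

lemma hartogs_ufd {R : Type*} [CommRing R] [IsDomain R] [UniqueFactorizationMonoid R]
    {K : Type*} [Field K] [Algebra R K] [IsFractionRing R K]
    (f : R) (g : K)
    (H : ∀ π : R, Prime π → ¬ π ∣ f →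
      ∃ a b : R, ¬ π ∣ b ∧ g * algebraMap R K b = algebraMap R K a) :
    ∃ a : R, ∃ m : ℕ, g * algebraMap R K (f ^ m) = algebraMap R K a := by
  have inj : Function.Injective (algebraMap R K) := IsFractionRing.injective R K
  have key : ∀ b : R, b ≠ 0 → ∀ gg : K,
      (∀ π : R, Prime π → ¬ π ∣ f →
        ∃ a b : R, ¬ π ∣ b ∧ gg * algebraMap R K b = algebraMap R K a) →
      ∀ a : R, gg * algebraMap R K b = algebraMap R K a →
      ∃ c : R, ∃ m : ℕ, gg * algebraMap R K (f ^ m) = algebraMap R K c := by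
    intro b
    induction b using UniqueFactorizationMonoid.induction_on_prime with
    | h₁ => intro h; exact absurd rfl h
    | h₂ b hb =>
      intro _ gg _ a ha
      obtain ⟨u, rfl⟩ := hb
      refine ⟨a * ↑u⁻¹, 0, ?_⟩
      have h1 : (algebraMap R K) ↑u * (algebraMap R K) ↑u⁻¹ = 1 := by
        rw [← map_mul, Units.mul_inv, map_one]
      calc gg * algebraMap R K (f ^ 0)
          = gg * ((algebraMap R K) ↑u * (algebraMap R K) ↑u⁻¹) := by rw [pow_zero, map_one, h1]
        _ = (gg * (algebraMap R K) ↑u) * (algebraMap R K) ↑u⁻¹ := by ring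
        _ = algebraMap R K (a * ↑u⁻¹) := by rw [ha, map_mul]
    | h₃ b' π hb' hπ IH =>
      intro _ gg hgg a ha
      by_cases hπf : π ∣ f
      · -- reduce to g₁ := gg * π and b'
        have h1 : (gg * algebraMap R K π) * algebraMap R K b' = algebraMap R K a := by
          rw [map_mul] at ha; linear_combination ha
        obtain ⟨c, m, hcm⟩ := IH hb' (gg * algebraMap R K π)
          (fun ρ hρ hρf => by
            obtain ⟨a₁, b₁, hb₁, he⟩ := hgg ρ hρ hρf
            exact ⟨a₁ * π, b₁, hb₁, by rw [map_mul, ← he]; ring⟩) a h1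
        obtain ⟨d, hd⟩ := hπf
        refine ⟨c * d, m + 1, ?_⟩
        have hfm : f ^ (m + 1) = π * f ^ m * d := by rw [pow_succ]; rw [hd]; ring
        calc gg * algebraMap R K (f ^ (m + 1))
            = (gg * algebraMap R K π * algebraMap R K (f ^ m)) * algebraMap R K d := by
              rw [hfm, map_mul, map_mul]; ring
          _ = algebraMap R K (c * d) := by rw [hcm, map_mul]
      · obtain ⟨a₁, b₁, hb₁, he⟩ := hgg π hπ hπf
        have hcross : a * b₁ = a₁ * (π * b') := by
          apply inj
          rw [map_mul, map_mul, ← ha, ← he]; ring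
        have hπa : π ∣ a := by
          have hd1 : π ∣ a * b₁ := ⟨a₁ * b', by rw [hcross]; ring⟩
          rcases hπ.dvd_or_dvd hd1 with h | h
          · exact h
          · exact absurd h hb₁
        obtain ⟨a', rfl⟩ := hπa
        have hπ0 : algebraMap R K π ≠ 0 := fun h => hπ.ne_zero (inj (h.trans (map_zero _).symm))
        have h2 : gg * algebraMap R K b' = algebraMap R K a' := by
          have : algebraMap R K π * (gg * algebraMap R K b') =
              algebraMap R K π * algebraMap R K a' := by
            rw [map_mul, map_mul] at ha
            linear_combination ha
          exact mul_left_cancel₀ hπ0 this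
        exact IH hb' gg hgg a' h2
  obtain ⟨⟨a, b⟩, hab⟩ := IsLocalization.surj (nonZeroDivisors R) g
  exact key b (nonZeroDivisors.ne_zero b.2) g H a hab

noncomputable instance specBasicOpenAlgebra (R : CommRingCat.{0}) (r : R) :
    Algebra R ((Spec.structureSheaf R).obj.obj (Opposite.op (PrimeSpectrum.basicOpen r))) :=
  StructureSheaf.openAlgebra R _

instance specBasicOpenLoc (R : CommRingCat.{0}) (r : R) :
    IsLocalization.Away r ((Spec.structureSheaf R).obj.obj (Opposite.op (PrimeSpectrum.basicOpen r))) :=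
  StructureSheaf.IsLocalization.to_basicOpen R r

lemma complement_key (R : CommRingCat.{0}) [IsDomain R] [UniqueFactorizationMonoid R]
    [IsNoetherianRing R]
    (U : (Spec R).Opens) (hne : (U : Set (Spec R)).Nonempty) (haff : IsAffineOpen U)
    (p : PrimeSpectrum R) (hp : p ∉ U)
    (hmin : ∀ x : PrimeSpectrum R, x ∉ U → x.asIdeal ≤ p.asIdeal → x = p)
    (q : PrimeSpectrum R) (hqp : q < p) : q.asIdeal = ⊥ := by
  classical
  by_contra hq0
  -- the ideal of the complement
  have hUs : ∃ s : Set (PrimeSpectrum R), s = (U : Set (Spec R)) := ⟨U.1, rfl⟩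
  obtain ⟨Us, hUs⟩ := hUs
  have hUsmem : ∀ x : PrimeSpectrum R, x ∈ Us ↔ x ∈ U := by
    intro x; rw [hUs]; rfl
  set I : Ideal R := PrimeSpectrum.vanishingIdeal Usᶜ with hIdef
  have hclosed : IsClosed Usᶜ := by
    rw [hUs]; exact U.isOpen.isClosed_compl
  have hzl : PrimeSpectrum.zeroLocus (I : Set R) = Usᶜ := by
    rw [hIdef, PrimeSpectrum.zeroLocus_vanishingIdeal_eq_closure, hclosed.closure_eq]
  have hnotU : ∀ x : PrimeSpectrum R, I ≤ x.asIdeal → x ∉ U := by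
    intro x hx
    have hm : x ∈ PrimeSpectrum.zeroLocus (I : Set R) := (PrimeSpectrum.mem_zeroLocus _ _).mpr hx
    rw [hzl] at hm
    exact fun hxU => hm ((hUsmem x).mpr hxU)
  have hIbot : I ≠ ⊥ := by
    intro h
    obtain ⟨x, hx⟩ := hne
    exact (hnotU x (h ▸ bot_le)) hx
  -- minimal primes over I
  have hfin : I.minimalPrimes.Finite := by
    rw [Ideal.minimalPrimes_eq_comap]
    exact (minimalPrimes.finite_of_isNoetherianRing (R ⧸ I)).image _
  set T : Set (Ideal R) := {J | J ∈ I.minimalPrimes ∧ J.IsPrincipal} with hTdef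
  have hTfin : T.Finite := hfin.subset fun J hJ => hJ.1
  set Tf : Finset (Ideal R) := hTfin.toFinset with hTf
  have hmemT : ∀ J : Ideal R, J ∈ Tf ↔ J ∈ I.minimalPrimes ∧ J.IsPrincipal := by
    intro J; rw [hTf, Set.Finite.mem_toFinset]; rfl
  let gen : {J // J ∈ Tf} → R := fun J =>
    @Submodule.IsPrincipal.generator _ _ _ _ _ J.1 ((hmemT J.1).mp J.2).2
  have hgen : ∀ J : {J // J ∈ Tf}, Ideal.span {gen J} = J.1 := fun J =>
    @Ideal.span_singleton_generator _ _ J.1 ((hmemT J.1).mp J.2).2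
  have hJprime : ∀ J : {J // J ∈ Tf}, (J.1).IsPrime := fun J =>
    ((hmemT J.1).mp J.2).1.1.1
  have hJI : ∀ J : {J // J ∈ Tf}, I ≤ J.1 := fun J => ((hmemT J.1).mp J.2).1.1.2
  set f : R := ∏ J ∈ Tf.attach, gen J with hfdef
  have hgen0 : ∀ J : {J // J ∈ Tf}, gen J ≠ 0 := by
    intro J h
    apply hIbot
    have : Ideal.span {gen J} = (⊥ : Ideal R) := by rw [h, Ideal.span_singleton_eq_bot]
    exact le_bot_iff.mp (this ▸ hgen J ▸ hJI J)
  have hgenPrime : ∀ J : {J // J ∈ Tf}, Prime (gen J) := by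
    intro J
    rw [← Ideal.span_singleton_prime (hgen0 J), hgen J]
    exact hJprime J
  have hf0 : f ≠ 0 := Finset.prod_ne_zero_iff.mpr fun J _ => hgen0 J
  have hfmem : ∀ x : PrimeSpectrum R, f ∈ x.asIdeal → x ∉ U := by
    intro x hfx
    obtain ⟨J, _, hJx⟩ := (Ideal.IsPrime.prod_mem_iff (hp := x.2)).mp hfx
    apply hnotU
    calc I ≤ J.1 := hJI J
      _ = Ideal.span {gen J} := (hgen J).symm
      _ ≤ x.asIdeal := (Ideal.span_singleton_le_iff_mem _).mpr hJx
  have hfp : f ∉ p.asIdeal := by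
    intro hfx
    obtain ⟨J, _, hJx⟩ := (Ideal.IsPrime.prod_mem_iff (hp := p.2)).mp hfx
    have hJle : J.1 ≤ p.asIdeal := by
      rw [← hgen J]; exact (Ideal.span_singleton_le_iff_mem _).mpr hJx
    have hx : (⟨J.1, hJprime J⟩ : PrimeSpectrum R) = p :=
      hmin _ (hnotU _ (hJI J)) hJle
    -- p is the principal prime generated by gen J
    have hpspan : p.asIdeal = Ideal.span {gen J} := by
      rw [hgen J, ← hx]
    have : gen J ∈ q.asIdeal :=
      prime_mem_of_prime_le_span (hgenPrime J) q.2 hq0 (hpspan ▸ hqp.le)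
    exact absurd (hpspan ▸ (Ideal.span_singleton_le_iff_mem _).mpr this :
      p.asIdeal ≤ q.asIdeal) (not_le_of_gt (by exact_mod_cast hqp : q.asIdeal < p.asIdeal))
  have hHyp : ∀ π : R, Prime π → ¬ π ∣ f → ∃ x : PrimeSpectrum R, x ∈ U ∧ π ∈ x.asIdeal := by
    intro π hπ hπf
    by_contra h'
    push_neg at h'
    have hsub : PrimeSpectrum.zeroLocus ({π} : Set R) ⊆ Usᶜ := by
      intro x hx
      exact fun hxU => (h' x ((hUsmem x).mp hxU)) ((PrimeSpectrum.mem_zeroLocus _ _).mp hx rfl)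
    have hIπ : I ≤ Ideal.span {π} := by
      have h1 : I ≤ PrimeSpectrum.vanishingIdeal (PrimeSpectrum.zeroLocus ({π} : Set R)) := by
        rw [hIdef]
        exact PrimeSpectrum.vanishingIdeal_anti_mono hsub
      have hprime : (Ideal.span ({π} : Set R)).IsPrime :=
        (Ideal.span_singleton_prime hπ.ne_zero).mpr hπ
      rwa [← PrimeSpectrum.zeroLocus_span, PrimeSpectrum.vanishingIdeal_zeroLocus_eq_radical,
        hprime.radical] at h1
    have hsp : (Ideal.span ({π} : Set R)).IsPrime := (Ideal.span_singleton_prime hπ.ne_zero).mpr hπ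
    obtain ⟨J, hJmp, hJle⟩ := @Ideal.exists_minimalPrimes_le _ _ I (Ideal.span {π}) hsp hIπ
    have hJp : J.IsPrime := hJmp.1.1
    have hJ0 : J ≠ ⊥ := fun h => hIbot (le_bot_iff.mp (h ▸ hJmp.1.2))
    have hπJ : π ∈ J := prime_mem_of_prime_le_span hπ hJp hJ0 hJle
    have hJeq : J = Ideal.span {π} :=
      le_antisymm hJle ((Ideal.span_singleton_le_iff_mem _).mpr hπJ)
    have hJTf : J ∈ Tf := (hmemT J).mpr ⟨hJmp, hJeq ▸ ⟨⟨π, rfl⟩⟩⟩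
    have hdvd : gen ⟨J, hJTf⟩ ∣ f := Finset.dvd_prod_of_mem gen (Finset.mem_attach Tf ⟨J, hJTf⟩)
    have hassoc : Associated π (gen ⟨J, hJTf⟩) := by
      rw [← Ideal.span_singleton_eq_span_singleton]
      rw [hgen ⟨J, hJTf⟩]
      exact hJeq.symm
    exact hπf ((hassoc).dvd.trans hdvd)
  -- The basic open W = D(f); it is affine and contains U and p.
  have hWaff : IsAffineOpen (X := Spec R) (PrimeSpectrum.basicOpen f) :=
    IsAffineOpen.Spec_basicOpen f
  have hUW : U ≤ PrimeSpectrum.basicOpen f := by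
    intro x hx
    exact (PrimeSpectrum.mem_basicOpen f x).mpr (fun h => hfmem x h hx)
  have hpW : p ∈ (PrimeSpectrum.basicOpen f : (Spec R).Opens) :=
    (PrimeSpectrum.mem_basicOpen f p).mpr hfp
  obtain ⟨x₀, hx₀⟩ := hne
  haveI : Nonempty U := ⟨⟨x₀, hx₀⟩⟩
  haveI : Nonempty (Scheme.Opens.toScheme (X := Spec R) (PrimeSpectrum.basicOpen f)) :=
    ⟨⟨x₀, hUW hx₀⟩⟩
  have hinjU := Scheme.germToFunctionField_injective (Spec R) U
  have hinjW := Scheme.germToFunctionField_injective (Spec R) (PrimeSpectrum.basicOpen f)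
  have hcomm : ∀ t, ((Spec R).germToFunctionField U) ((Spec R).presheaf.map (homOfLE hUW).op t)
      = ((Spec R).germToFunctionField (PrimeSpectrum.basicOpen f)) t := fun t =>
    (Spec R).presheaf.germ_res_apply (homOfLE hUW) _ _ t
  have halgK : ∀ (V : (Spec R).Opens) [Nonempty V] (hgV : genericPoint (Spec R) ∈ V) (c : R),
      ((Spec R).germToFunctionField V) (StructureSheaf.toOpen R V c)
        = algebraMap R (Spec R).functionField c := by
    intro V _ hgV c
    exact StructureSheaf.algebraMap_germ_apply V (genericPoint (Spec R)) hgV c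
  -- surjectivity of the restriction map
  have hsurj : Function.Surjective ((Spec R).presheaf.map (homOfLE hUW).op) := by
    intro s
    set K := (Spec R).functionField with hKdef
    set g : K := ((Spec R).germToFunctionField U) s with hgdef
    have hmem2 : ∀ π : R, Prime π → ¬ π ∣ f →
        ∃ a b : R, ¬ π ∣ b ∧ g * algebraMap R K b = algebraMap R K a := by
      intro π hπ hπf
      obtain ⟨x, hxU, hπx⟩ := hHyp π hπ hπf
      obtain ⟨V, hVb, hxV, hVU⟩ :=
        TopologicalSpace.Opens.isBasis_iff_nbhd.mp PrimeSpectrum.isBasis_basic_opens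
          (show x ∈ (U : TopologicalSpace.Opens (PrimeSpectrum R)) from hxU)
      obtain ⟨r, rfl⟩ := hVb
      have hrx : r ∉ x.asIdeal := (PrimeSpectrum.mem_basicOpen r x).mp hxV
      have hle : (PrimeSpectrum.basicOpen r : (Spec R).Opens) ≤ U := hVU
      haveI : Nonempty (Scheme.Opens.toScheme (X := Spec R) (PrimeSpectrum.basicOpen r)) :=
    ⟨⟨x, hxV⟩⟩
      set sr : (Spec.structureSheaf R).obj.obj (Opposite.op (PrimeSpectrum.basicOpen r)) :=
        (Spec R).presheaf.map (homOfLE hle).op s with hsrdef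
      haveI := StructureSheaf.IsLocalization.to_basicOpen R r
      obtain ⟨⟨a, c⟩, hac⟩ := IsLocalization.surj (Submonoid.powers r) sr
      obtain ⟨m, hm⟩ := c.2
      refine ⟨a, c.1, ?_, ?_⟩
      · intro hdvd
        apply hrx
        have hm' : r ^ m = c.1 := hm
        have hπr : π ∣ r := hπ.dvd_of_dvd_pow (n := m) (by rw [hm']; exact hdvd)
        obtain ⟨d, rfl⟩ := hπr
        exact x.asIdeal.mul_mem_right _ hπx
      · have h1 := congrArg ((Spec R).germToFunctionField (PrimeSpectrum.basicOpen r)) hac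
        erw [map_mul] at h1
        have h2 : ((Spec R).germToFunctionField (PrimeSpectrum.basicOpen r)) sr = g := by
          rw [hsrdef, hgdef]
          exact (Spec R).presheaf.germ_res_apply (homOfLE hle) _ _ s
        have hgen' : genericPoint (Spec R) ∈ (PrimeSpectrum.basicOpen r : (Spec R).Opens) := by
          refine ((genericPoint_spec (Spec R)).mem_open_set_iff
            (PrimeSpectrum.basicOpen r).isOpen).mpr ?_
          exact ⟨x, trivial, hxV⟩
        have h3 := halgK (PrimeSpectrum.basicOpen r) hgen' c.1
        have h4 := halgK (PrimeSpectrum.basicOpen r) hgen' a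
        rw [h2] at h1
        rw [show (algebraMap R ((Spec.structureSheaf R).obj.obj
          (Opposite.op (PrimeSpectrum.basicOpen r)))) c.1
            = StructureSheaf.toOpen R (PrimeSpectrum.basicOpen r) c.1 from rfl] at h1
        rw [show (algebraMap R ((Spec.structureSheaf R).obj.obj
          (Opposite.op (PrimeSpectrum.basicOpen r)))) a
            = StructureSheaf.toOpen R (PrimeSpectrum.basicOpen r) a from rfl] at h1
        rw [h3, h4] at h1
        exact h1
    obtain ⟨a, m, hgm⟩ := hartogs_ufd f g hmem2
    haveI := StructureSheaf.IsLocalization.to_basicOpen R f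
    set t : (Spec.structureSheaf R).obj.obj (Opposite.op (PrimeSpectrum.basicOpen f)) :=
      IsLocalization.mk' ((Spec.structureSheaf R).obj.obj (Opposite.op
        (PrimeSpectrum.basicOpen f))) a (⟨f ^ m, m, rfl⟩ : Submonoid.powers f) with htdef
    have hspec := IsLocalization.mk'_spec
      ((Spec.structureSheaf R).obj.obj (Opposite.op (PrimeSpectrum.basicOpen f)))
      a (⟨f ^ m, m, rfl⟩ : Submonoid.powers f)
    have hgenW : genericPoint (Spec R) ∈ (PrimeSpectrum.basicOpen f : (Spec R).Opens) := by
      refine ((genericPoint_spec (Spec R)).mem_open_set_iff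
        (PrimeSpectrum.basicOpen f).isOpen).mpr ?_
      exact ⟨x₀, trivial, hUW hx₀⟩
    have h5 := congrArg ((Spec R).germToFunctionField (PrimeSpectrum.basicOpen f)) hspec
    erw [map_mul] at h5
    rw [show (algebraMap R ((Spec.structureSheaf R).obj.obj
      (Opposite.op (PrimeSpectrum.basicOpen f)))) (f ^ m)
        = StructureSheaf.toOpen R (PrimeSpectrum.basicOpen f) (f ^ m) from rfl] at h5
    rw [show (algebraMap R ((Spec.structureSheaf R).obj.obj
      (Opposite.op (PrimeSpectrum.basicOpen f)))) a
        = StructureSheaf.toOpen R (PrimeSpectrum.basicOpen f) a from rfl] at h5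
    rw [halgK (PrimeSpectrum.basicOpen f) hgenW (f ^ m),
      halgK (PrimeSpectrum.basicOpen f) hgenW a] at h5
    have hne0 : algebraMap R K (f ^ m) ≠ 0 := by
      have hinj : Function.Injective (algebraMap R K) := IsFractionRing.injective R K
      simpa [map_ne_zero_iff _ hinj] using pow_ne_zero m hf0
    have h6 : ((Spec R).germToFunctionField (PrimeSpectrum.basicOpen f)) t = g :=
      mul_right_cancel₀ hne0 (h5.trans hgm.symm)
    exact ⟨t, hinjU (by rw [hcomm t, h6, hgdef])⟩
  have hinjres : Function.Injective ((Spec R).presheaf.map (homOfLE hUW).op) := by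
    intro t₁ t₂ h
    exact hinjW (by rw [← hcomm, h, hcomm])
  haveI : IsIso ((Spec R).presheaf.map (homOfLE hUW).op) :=
    (ConcreteCategory.isIso_iff_bijective _).mpr ⟨hinjres, hsurj⟩
  haveI : IsIso (Spec.map ((Spec R).presheaf.map (homOfLE hUW).op)) := inferInstance
  have hcomp := hWaff.map_fromSpec haff (homOfLE hUW).op
  -- p lies in the range of fromSpec of W, hence in U
  have hpr : p ∈ Set.range (hWaff.fromSpec.base) := by
    rw [hWaff.range_fromSpec]; exact hpW
  obtain ⟨y, hy⟩ := hpr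
  obtain ⟨z, hz⟩ := (Scheme.homeoOfIso
    (asIso (Spec.map ((Spec R).presheaf.map (homOfLE hUW).op)))).surjective y
  apply hp
  have hzp : haff.fromSpec.base z = p := by
    rw [← hcomp]
    rw [Scheme.Hom.comp_base, TopCat.comp_app]
    have : (Spec.map ((Spec R).presheaf.map (homOfLE hUW).op)).base z = y := hz
    rw [this, hy]
  have : p ∈ Set.range (haff.fromSpec.base) := ⟨z, hzp⟩
  rw [haff.range_fromSpec] at this
  exact this

theorem pure_codim_one_generic (R : CommRingCat.{0}) [IsDomain R]
    [UniqueFactorizationMonoid R] [IsNoetherianRing R]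
    (U : (Spec R).Opens) (hne : (U : Set (Spec R)).Nonempty) (haff : IsAffineOpen U) :
    PureCodimOne (↑U : Set (Spec R))ᶜ := by
  intro Z hZC hZmax
  set p : PrimeSpectrum R := Z.isIrreducible.genericPoint with hpdef
  have hZp : closure ({p} : Set (PrimeSpectrum R)) = Z.carrier :=
    Z.isIrreducible.genericPoint_closure_eq.trans Z.isClosed.closure_eq
  have hpZ : p ∈ Z.carrier := hZp ▸ subset_closure rfl
  have hpU : p ∉ U := fun h => hZC hpZ (by exact h)
  have hmin : ∀ x : PrimeSpectrum R, x ∉ U → x.asIdeal ≤ p.asIdeal → x = p := by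
    intro x hxU hxp
    have hspec : x ⤳ p := (PrimeSpectrum.le_iff_specializes x p).mp hxp
    have hpx : p ∈ closure ({x} : Set (PrimeSpectrum R)) := hspec.mem_closure
    set Z' : IrreducibleCloseds (PrimeSpectrum R) :=
      ⟨closure {x}, isIrreducible_singleton.closure, isClosed_closure⟩ with hZ'def
    have hZ'C : Z'.carrier ⊆ (↑U : Set (Spec R))ᶜ := by
      apply closure_minimal _ (U.isOpen.isClosed_compl)
      intro y hy
      replace hy : y = x := hy
      subst hy
      exact fun hc => hxU (by exact hc)
    have hZZ' : Z ≤ Z' := by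
      change Z.carrier ⊆ Z'.carrier
      rw [← hZp]
      exact closure_minimal (Set.singleton_subset_iff.mpr hpx) isClosed_closure
    have heq := hZmax Z' hZ'C hZZ'
    have hcc : closure ({x} : Set (PrimeSpectrum R)) = closure ({p} : Set (PrimeSpectrum R)) := by
      rw [hZp]
      exact congrArg IrreducibleCloseds.carrier heq
    have h1 : p ≤ x := (PrimeSpectrum.le_iff_specializes p x).mpr
      (specializes_iff_mem_closure.mpr (hcc ▸ (subset_closure rfl : x ∈ closure {x})))
    exact le_antisymm (show x ≤ p from hxp) h1
  have hkey : ∀ q : PrimeSpectrum R, q < p → q.asIdeal = ⊥ :=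
    complement_key R U hne haff p hpU hmin
  have hpbot : p.asIdeal ≠ ⊥ := by
    intro h
    obtain ⟨x, hx⟩ := hne
    apply hZC (show x ∈ Z.carrier from ?_) hx
    rw [← hZp, PrimeSpectrum.closure_singleton, h]
    exact (PrimeSpectrum.mem_zeroLocus _ _).mpr (by simp)
  have hq0 : ∀ y : PrimeSpectrum R, y < p → Order.height y = 0 := by
    intro y hy
    rw [Order.height_eq_zero]
    intro z hz
    show y ≤ z
    show y.asIdeal ≤ z.asIdeal
    rw [hkey y hy]
    exact bot_le
  have h1 : Order.height p ≤ (1 : ℕ) := Order.height_le_coe_iff.mpr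
    (fun y hy => by rw [hq0 y hy]; exact_mod_cast zero_lt_one)
  have hne1 : Order.height p ≠ 0 := by
    intro h0
    rw [Order.height_eq_zero] at h0
    have hminp := h0
    apply hpbot
    have hbp : (⟨⊥, Ideal.bot_prime⟩ : PrimeSpectrum R) ≤ p := bot_le
    exact le_bot_iff.mp (hminp hbp)
  have hheight : Order.height p = 1 :=
    le_antisymm (by exact_mod_cast h1) (ENat.one_le_iff_ne_zero.mpr hne1)
  have h3 : (PrimeSpectrum.pointsEquivIrreducibleCloseds R) p = OrderDual.toDual Z := by
    have hofd : (OrderDual.ofDual ((PrimeSpectrum.pointsEquivIrreducibleCloseds R) p) :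
        IrreducibleCloseds (PrimeSpectrum R)) = Z := by
      apply IrreducibleCloseds.ext
      show closure ({p} : Set (PrimeSpectrum R)) = Z.carrier
      exact hZp
    exact congrArg OrderDual.toDual hofd
  calc Order.coheight Z = Order.height (OrderDual.toDual Z) := rfl
    _ = Order.height ((PrimeSpectrum.pointsEquivIrreducibleCloseds R) p) := by rw [h3]; rfl
    _ = Order.height p := Order.height_orderIso _ p
    _ = 1 := hheight

theorem complement_of_affine_open_pure_codim_one
    (k : Type) [Field k] (n : ℕ)
    (U : (Spec (CommRingCat.of (MvPolynomial (Fin n) k))).Opens)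
    (hne : (U : Set (Spec (CommRingCat.of (MvPolynomial (Fin n) k)))).Nonempty)
    (haff : IsAffineOpen U) :
    (↑U : Set (Spec (CommRingCat.of (MvPolynomial (Fin n) k))))ᶜ = ∅ ∨
      PureCodimOne (↑U : Set (Spec (CommRingCat.of (MvPolynomial (Fin n) k))))ᶜ := by
  haveI : IsDomain (CommRingCat.of (MvPolynomial (Fin n) k)) :=
    inferInstanceAs (IsDomain (MvPolynomial (Fin n) k))
  haveI : UniqueFactorizationMonoid (CommRingCat.of (MvPolynomial (Fin n) k)) :=
    inferInstanceAs (UniqueFactorizationMonoid (MvPolynomial (Fin n) k))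
  haveI : IsNoetherianRing (CommRingCat.of (MvPolynomial (Fin n) k)) :=
    inferInstanceAs (IsNoetherianRing (MvPolynomial (Fin n) k))
  exact Or.inr (pure_codim_one_generic _ U hne haff)
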